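/- Let H ∈ 𝔄 be reflection invariant and globally gauge invariant. If the full matrix of coupling constants J = (J_{𝔍𝔍'})_{𝔍,𝔍'∈𝒫₊} of H is positive semidefinite, then the Boltzmann functional ω_H(A) = Tr(A·e^{−H}) is reflection positive on 𝔄₊, i.e. 0 ≤ ω_H(Θ(A)∘A) for all A ∈ 𝔄₊. -/

import Mathlib

open ComplexOrder

noncomputable section

/-- The setting of the paper: a finite set `Λ` with a fixed-point free involution `ϑ`
exchanging `Λp` and its complement, the Clifford algebra (algebra of Majoranas) `carrier`
with self-adjoint generators `c i`, the global gauge automorphism `gauge`, the antilinear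
reflection `*`-automorphism `Θ`, a square root `ζ` of `-1`, the twisted product `twist`,
a choice `P` of orderings of the subsets of `Λp` (giving the bases
`{C J : J ∈ P}` of `𝔄₊` and `{Θ(C J) ∘ C J' : J, J' ∈ P}` of `𝔄`),
and the tracial state `Tr` picking out the coefficient of `1` in the basis expansion. -/
structure MajoranaSetting where
  Λ : Type
  [fintypeΛ : Fintype Λ]
  [deceqΛ : DecidableEq Λ]
  ϑ : Λ → Λ
  ϑ_invol : Function.Involutive ϑ
  ϑ_fixfree : ∀ i, ϑ i ≠ i
  Λp : Finset Λ
  ϑ_exch : ∀ i, i ∈ Λp ↔ ϑ i ∉ Λp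
  carrier : Type
  [nring : NormedRing carrier]
  [nalg : NormedAlgebra ℂ carrier]
  [cmpl : CompleteSpace carrier]
  [starring : StarRing carrier]
  [starmod : StarModule ℂ carrier]
  c : Λ → carrier
  c_star : ∀ i, star (c i) = c i
  clifford : ∀ i j, c i * c j + c j * c i = if i = j then (2 : carrier) else 0
  gauge : carrier ≃ₐ[ℂ] carrier
  gauge_c : ∀ i, gauge (c i) = - c i
  Θ : carrier → carrier
  Θ_add : ∀ x y, Θ (x + y) = Θ x + Θ y
  Θ_smul : ∀ (z : ℂ) (x), Θ (z • x) = (starRingEnd ℂ z) • Θ x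
  Θ_mul : ∀ x y, Θ (x * y) = Θ x * Θ y
  Θ_star : ∀ x, Θ (star x) = star (Θ x)
  Θ_invol : ∀ x, Θ (Θ x) = x
  Θ_c : ∀ i, Θ (c i) = c (ϑ i)
  ζ : ℂ
  ζ_sq : ζ ^ 2 = -1
  twist : carrier → carrier → carrier
  twist_add_left : ∀ x x' y, twist (x + x') y = twist x y + twist x' y
  twist_add_right : ∀ x y y', twist x (y + y') = twist x y + twist x y'
  twist_smul_left : ∀ (z : ℂ) (x y), twist (z • x) y = z • twist x y
  twist_smul_right : ∀ (z : ℂ) (x y), twist x (z • y) = z • twist x y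
  twist_spec : ∀ (Am Ap Bm Bp : carrier) (a b a' b' : ℕ),
    a ≤ 1 → b ≤ 1 → a' ≤ 1 → b' ≤ 1 →
    Am ∈ Algebra.adjoin ℂ (c '' {i | i ∉ Λp}) →
    Ap ∈ Algebra.adjoin ℂ (c '' {i | i ∈ Λp}) →
    Bm ∈ Algebra.adjoin ℂ (c '' {i | i ∉ Λp}) →
    Bp ∈ Algebra.adjoin ℂ (c '' {i | i ∈ Λp}) →
    gauge Am = ((-1 : ℂ) ^ a) • Am →
    gauge Ap = ((-1 : ℂ) ^ b) • Ap →
    gauge Bm = ((-1 : ℂ) ^ a') • Bm →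
    gauge Bp = ((-1 : ℂ) ^ b') • Bp →
    twist (Am * Ap) (Bm * Bp)
      = ζ ^ ((a * b' : ℤ) - (b * a' : ℤ)) • (Am * Ap * (Bm * Bp))
  P : Finset (List Λ)
  P_nodup : ∀ J ∈ P, J.Nodup
  P_sub : ∀ J ∈ P, ∀ i ∈ J, i ∈ Λp
  P_unique : ∀ s : Finset Λ, s ⊆ Λp → ∃! J, J ∈ P ∧ J.toFinset = s
  Tr : carrier →ₗ[ℂ] ℂ
  Tr_basis : ∀ J ∈ P, ∀ J' ∈ P,
    Tr (twist (Θ ((J.map c).prod)) ((J'.map c).prod))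
      = if J = [] ∧ J' = [] then 1 else 0
  basis_indep : LinearIndependent ℂ
    (fun p : {J // J ∈ P} × {J // J ∈ P} =>
      twist (Θ ((p.1.1.map c).prod)) ((p.2.1.map c).prod))
  basis_span : ∀ x : carrier, x ∈ Submodule.span ℂ
    (Set.range fun p : {J // J ∈ P} × {J // J ∈ P} =>
      twist (Θ ((p.1.1.map c).prod)) ((p.2.1.map c).prod))
  plus_span : ∀ x ∈ Algebra.adjoin ℂ (c '' {i | i ∈ Λp}),
    x ∈ Submodule.span ℂ (Set.range fun J : {J // J ∈ P} => ((J.1.map c).prod))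

attribute [instance] MajoranaSetting.fintypeΛ MajoranaSetting.deceqΛ
  MajoranaSetting.nring MajoranaSetting.nalg MajoranaSetting.cmpl
  MajoranaSetting.starring MajoranaSetting.starmod

namespace MajoranaSetting

variable (S : MajoranaSetting)

/-- The subalgebra `𝔄₊` generated by the Majoranas on the `+` side. -/
def Aplus : Subalgebra ℂ S.carrier := Algebra.adjoin ℂ (S.c '' {i | i ∈ S.Λp})

/-- The subalgebra `𝔄₋` generated by the Majoranas on the `-` side. -/
def Aminus : Subalgebra ℂ S.carrier := Algebra.adjoin ℂ (S.c '' {i | i ∉ S.Λp})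

/-- The monomial `C_𝔍 = c_{i₁} ⋯ c_{i_k}`. -/
def C (J : List S.Λ) : S.carrier := (J.map S.c).prod

/-- `q_𝔍 = (-1)^{k(k-1)/2}`. -/
def q (J : List S.Λ) : ℂ := (-1 : ℂ) ^ (J.length * (J.length - 1) / 2)

/-- `s_𝔍 = ζ^{k(k-1)/2}`. -/
def sgn (J : List S.Λ) : ℂ := S.ζ ^ (J.length * (J.length - 1) / 2)

/-- The exponential `e^x` in the (finite-dimensional) algebra `𝔄`. -/
def expm (x : S.carrier) : S.carrier := NormedSpace.exp x

/-- The Hamiltonian `H = -∑_{𝔍,𝔍' ∈ 𝒫₊} J_{𝔍𝔍'} Θ(C_𝔍) ∘ C_𝔍'`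
determined by coupling constants `Jc`. -/
def Ham (Jc : List S.Λ → List S.Λ → ℂ) : S.carrier :=
  - ∑ J ∈ S.P, ∑ J' ∈ S.P, Jc J J' • S.twist (S.Θ (S.C J)) (S.C J')

/-- The index type of the basis `{C J : J ∈ 𝒫₊}`. -/
abbrev PIdx := {J : List S.Λ // J ∈ S.P}

/-- The index type `𝒫₊ - {∅}` of couplings across the reflection plane. -/
abbrev PIdx0 := {p : S.PIdx // p.1 ≠ []}

/-- The full matrix of coupling constants. -/
def Jmat (Jc : List S.Λ → List S.Λ → ℂ) : Matrix S.PIdx S.PIdx ℂ :=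
  Matrix.of fun p q => Jc p.1 q.1

/-- The matrix `J⁰` of coupling constants across the reflection plane. -/
def Jmat0 (Jc : List S.Λ → List S.Λ → ℂ) : Matrix S.PIdx0 S.PIdx0 ℂ :=
  Matrix.of fun p q => Jc p.1.1 q.1.1

end MajoranaSetting
namespace MajoranaSetting

variable (S : MajoranaSetting)

lemma C_nil : S.C ([] : List S.Λ) = 1 := by simp [C]

lemma C_cons (i : S.Λ) (L : List S.Λ) : S.C (i :: L) = S.c i * S.C L := by
  simp [C]

lemma Θ_zero : S.Θ 0 = 0 := by
  have h := S.Θ_add 0 0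
  rw [add_zero] at h
  exact (left_eq_add.mp h)

lemma Θ_one : S.Θ 1 = 1 := by
  have h : S.Θ (S.Θ 1) = S.Θ (S.Θ 1) * S.Θ 1 := by
    rw [← S.Θ_mul, mul_one]
  rw [S.Θ_invol] at h
  simpa using h.symm

lemma nil_mem_P : [] ∈ S.P := by
  obtain ⟨J, ⟨hJP, hJ⟩, -⟩ := S.P_unique ∅ (Finset.empty_subset _)
  have hJnil : J = [] := (List.toFinset_eq_empty_iff J).mp hJ
  exact hJnil ▸ hJP

lemma gauge_C (L : List S.Λ) : S.gauge (S.C L) = ((-1 : ℂ) ^ L.length) • S.C L := by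
  induction L with
  | nil => simp [C_nil]
  | cons i L ih =>
      rw [C_cons, map_mul, S.gauge_c, ih, List.length_cons, pow_succ, mul_smul,
        neg_one_smul, mul_smul_comm, neg_mul]

lemma Θ_C (L : List S.Λ) : S.Θ (S.C L) = S.C (L.map S.ϑ) := by
  induction L with
  | nil => simpa [C_nil] using S.Θ_one
  | cons i L ih => rw [C_cons, S.Θ_mul, S.Θ_c, ih, List.map_cons, C_cons]

lemma C_mem_adjoin (s : Set S.Λ) (L : List S.Λ) (h : ∀ i ∈ L, i ∈ s) :
    S.C L ∈ Algebra.adjoin ℂ (S.c '' s) := by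
  induction L with
  | nil => rw [C_nil]; exact one_mem _
  | cons i L ih =>
      rw [C_cons]
      exact mul_mem (Algebra.subset_adjoin ⟨i, h i (by simp), rfl⟩)
        (ih fun j hj => h j (by simp [hj]))

lemma c_anticomm {i j : S.Λ} (h : i ≠ j) : S.c i * S.c j = -(S.c j * S.c i) := by
  have hc := S.clifford i j
  rw [if_neg h] at hc
  exact eq_neg_of_add_eq_zero_left hc

lemma c_comm_C (i : S.Λ) (L : List S.Λ) (h : ∀ j ∈ L, j ≠ i) :
    S.c i * S.C L = ((-1 : ℂ) ^ L.length) • (S.C L * S.c i) := by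
  induction L with
  | nil => simp [C_nil]
  | cons j L ih =>
      have hji : i ≠ j := (h j (by simp)).symm
      have ih' := ih fun k hk => h k (by simp [hk])
      calc S.c i * S.C (j :: L) = (S.c i * S.c j) * S.C L := by rw [C_cons, mul_assoc]
        _ = -(S.c j * (S.c i * S.C L)) := by rw [S.c_anticomm hji, neg_mul, mul_assoc]
        _ = -(S.c j * (((-1 : ℂ) ^ L.length) • (S.C L * S.c i))) := by rw [ih']
        _ = ((-1 : ℂ) ^ (j :: L).length) • (S.C (j :: L) * S.c i) := by
              rw [List.length_cons, pow_succ, mul_smul, neg_one_smul, C_cons, mul_assoc,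
                mul_smul_comm, smul_neg]

lemma C_comm_C (L M : List S.Λ) (h : ∀ i ∈ L, ∀ j ∈ M, i ≠ j) :
    S.C L * S.C M = ((-1 : ℂ) ^ (L.length * M.length)) • (S.C M * S.C L) := by
  induction L with
  | nil => simp [C_nil]
  | cons i L ih =>
      have hi : ∀ j ∈ M, j ≠ i := fun j hj => (h i (by simp) j hj).symm
      have ih' := ih fun a ha j hj => h a (by simp [ha]) j hj
      calc S.C (i :: L) * S.C M = S.c i * (S.C L * S.C M) := by rw [C_cons, mul_assoc]
        _ = S.c i * (((-1 : ℂ) ^ (L.length * M.length)) • (S.C M * S.C L)) := by rw [ih']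
        _ = ((-1 : ℂ) ^ (L.length * M.length)) • ((S.c i * S.C M) * S.C L) := by
              rw [mul_smul_comm, mul_assoc]
        _ = ((-1 : ℂ) ^ (L.length * M.length)) • ((((-1 : ℂ) ^ M.length) • (S.C M * S.c i)) * S.C L) := by
              rw [S.c_comm_C i M hi]
        _ = ((-1 : ℂ) ^ ((i :: L).length * M.length)) • (S.C M * S.C (i :: L)) := by
              rw [smul_mul_assoc, smul_smul, List.length_cons, C_cons]
              congr 1
              · rw [← pow_add]; congr 1; ring
              · rw [mul_assoc]

lemma neg_one_pow_mod (n : ℕ) : ((-1 : ℂ)) ^ n = (-1) ^ (n % 2) := by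
  conv_lhs => rw [← Nat.div_add_mod n 2]
  rw [pow_add, pow_mul, neg_one_sq, one_pow, one_mul]

/-- The homogeneous subspaces of `𝔄₊` spanned by basis monomials of fixed parity. -/
def Vp (ε : ℕ) : Submodule ℂ S.carrier :=
  Submodule.span ℂ {x | ∃ J : S.PIdx, J.1.length % 2 = ε ∧ x = S.C J.1}

/-- The homogeneous subspaces of `𝔄₋` spanned by reflected basis monomials of fixed parity. -/
def Vm (ε : ℕ) : Submodule ℂ S.carrier :=
  Submodule.span ℂ {x | ∃ J : S.PIdx, J.1.length % 2 = ε ∧ x = S.C (J.1.map S.ϑ)}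

/-- The span of the basis monomials of `𝔄₊`. -/
def V : Submodule ℂ S.carrier :=
  Submodule.span ℂ (Set.range fun J : S.PIdx => S.C J.1)

lemma Vp_le_V (ε : ℕ) : S.Vp ε ≤ S.V :=
  Submodule.span_le.mpr fun _x hx => by
    obtain ⟨J, _, rfl⟩ := hx; exact Submodule.subset_span ⟨J, rfl⟩

lemma Vp_le_Aplus (ε : ℕ) : S.Vp ε ≤ Subalgebra.toSubmodule S.Aplus :=
  Submodule.span_le.mpr fun _x hx => by
    obtain ⟨J, _, rfl⟩ := hx
    exact S.C_mem_adjoin _ J.1 fun i hi => S.P_sub J.1 J.2 i hi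

lemma Vm_le_Aminus (ε : ℕ) : S.Vm ε ≤ Subalgebra.toSubmodule S.Aminus :=
  Submodule.span_le.mpr fun _x hx => by
    obtain ⟨J, _, rfl⟩ := hx
    refine S.C_mem_adjoin _ (J.1.map S.ϑ) fun i hi => ?_
    obtain ⟨j, hj, rfl⟩ := List.mem_map.mp hi
    exact (S.ϑ_exch j).mp (S.P_sub J.1 J.2 j hj)

lemma gauge_Vp {ε : ℕ} {x : S.carrier} (hx : x ∈ S.Vp ε) :
    S.gauge x = ((-1 : ℂ) ^ ε) • x := by
  induction hx using Submodule.span_induction with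
  | mem a ha => obtain ⟨J, hJ, rfl⟩ := ha; rw [gauge_C, neg_one_pow_mod, hJ]
  | zero => simp
  | add x y hx hy ihx ihy => rw [map_add, ihx, ihy, smul_add]
  | smul z x hx ih => rw [map_smul, ih, smul_comm]

lemma gauge_Vm {ε : ℕ} {x : S.carrier} (hx : x ∈ S.Vm ε) :
    S.gauge x = ((-1 : ℂ) ^ ε) • x := by
  induction hx using Submodule.span_induction with
  | mem a ha =>
      obtain ⟨J, hJ, rfl⟩ := ha
      rw [gauge_C, List.length_map, neg_one_pow_mod, hJ]
  | zero => simp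
  | add x y hx hy ihx ihy => rw [map_add, ihx, ihy, smul_add]
  | smul z x hx ih => rw [map_smul, ih, smul_comm]

lemma Θ_mem_Vm {ε : ℕ} {x : S.carrier} (hx : x ∈ S.Vp ε) : S.Θ x ∈ S.Vm ε := by
  induction hx using Submodule.span_induction with
  | mem a ha =>
      obtain ⟨J, hJ, rfl⟩ := ha
      rw [Θ_C]; exact Submodule.subset_span ⟨J, hJ, rfl⟩
  | zero => rw [S.Θ_zero]; exact zero_mem _
  | add x y hx hy ihx ihy => rw [S.Θ_add]; exact add_mem ihx ihy
  | smul z x hx ih => rw [S.Θ_smul]; exact Submodule.smul_mem _ _ ih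

lemma comm_pm {ε ε' : ℕ} {x y : S.carrier} (hx : x ∈ S.Vp ε) (hy : y ∈ S.Vm ε') :
    x * y = ((-1 : ℂ) ^ (ε * ε')) • (y * x) := by
  induction hx using Submodule.span_induction with
  | mem a ha =>
      obtain ⟨J, hJ, rfl⟩ := ha
      induction hy using Submodule.span_induction with
      | mem b hb =>
          obtain ⟨K, hK, rfl⟩ := hb
          have hdis : ∀ i ∈ J.1, ∀ j ∈ K.1.map S.ϑ, i ≠ j := by
            intro i hi j hj
            obtain ⟨k, hk, rfl⟩ := List.mem_map.mp hj
            intro hij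
            exact ((S.ϑ_exch k).mp (S.P_sub K.1 K.2 k hk)) (hij ▸ S.P_sub J.1 J.2 i hi)
          rw [S.C_comm_C J.1 (K.1.map S.ϑ) hdis, List.length_map]
          congr 1
          rw [neg_one_pow_mod, neg_one_pow_mod (ε * ε'), Nat.mul_mod, hJ, hK]
      | zero => simp
      | add u v hu hv ihu ihv => rw [mul_add, ihu, ihv, add_mul, smul_add]
      | smul z u hu ih => rw [mul_smul_comm, ih, smul_mul_assoc, smul_comm]
  | zero => simp
  | add u v hu hv ihu ihv => rw [add_mul, ihu, ihv, mul_add, smul_add]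
  | smul z u hu ih => rw [smul_mul_assoc, ih, mul_smul_comm, smul_comm]

lemma twist_formula {ε ε' : ℕ} (hε : ε ≤ 1) (hε' : ε' ≤ 1) {x y : S.carrier}
    (hx : x ∈ S.Vm ε) (hy : y ∈ S.Vp ε') :
    S.twist x y = S.ζ ^ ((ε : ℤ) * (ε' : ℤ)) • (x * y) := by
  have h := S.twist_spec x 1 1 y ε 0 0 ε' hε (by norm_num) (by norm_num) hε'
    (S.Vm_le_Aminus ε hx) (one_mem _) (one_mem _) (S.Vp_le_Aplus ε' hy)
    (S.gauge_Vm hx) (by simp) (by simp) (S.gauge_Vp hy)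
  simpa using h

lemma one_mem_Vm0 : (1 : S.carrier) ∈ S.Vm 0 :=
  Submodule.subset_span ⟨⟨[], S.nil_mem_P⟩, rfl, by simp [C_nil]⟩

lemma one_mem_Vp0 : (1 : S.carrier) ∈ S.Vp 0 :=
  Submodule.subset_span ⟨⟨[], S.nil_mem_P⟩, rfl, (S.C_nil).symm⟩

lemma mod_two_le (n : ℕ) : n % 2 ≤ 1 := Nat.le_of_lt_succ (Nat.mod_lt _ (by norm_num))

lemma C_mem_Vp (J : S.PIdx) : S.C J.1 ∈ S.Vp (J.1.length % 2) :=
  Submodule.subset_span ⟨J, rfl, rfl⟩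

lemma twist_one_left {ε : ℕ} (hε : ε ≤ 1) {y : S.carrier} (hy : y ∈ S.Vp ε) :
    S.twist 1 y = y := by
  rw [S.twist_formula (by norm_num) hε S.one_mem_Vm0 hy]
  simp


lemma CJ_linearIndependent : LinearIndependent ℂ (fun J : S.PIdx => S.C J.1) := by
  have he : Function.Injective
      (fun J : S.PIdx => ((⟨[], S.nil_mem_P⟩ : S.PIdx), J)) := by
    intro a b hab
    simpa using congrArg Prod.snd hab
  have h2 := S.basis_indep.comp _ he
  have hfe : (fun J : S.PIdx => S.C J.1)
      = (fun p : S.PIdx × S.PIdx =>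
          S.twist (S.Θ ((p.1.1.map S.c).prod)) ((p.2.1.map S.c).prod)) ∘
        (fun J : S.PIdx => ((⟨[], S.nil_mem_P⟩ : S.PIdx), J)) := by
    funext J
    show S.C J.1 = S.twist (S.Θ (S.C [])) (S.C J.1)
    rw [C_nil, S.Θ_one, S.twist_one_left (mod_two_le _) (S.C_mem_Vp J)]
  rw [hfe]; exact h2

lemma mem_Vp_of_gauge {ε : ℕ} (hε : ε ≤ 1) {v : S.carrier} (hv : v ∈ S.V)
    (hg : S.gauge v = ((-1 : ℂ) ^ ε) • v) : v ∈ S.Vp ε := by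
  obtain ⟨f, hf⟩ := (Submodule.mem_span_range_iff_exists_fun ℂ).mp hv
  have hzero : ∀ J : S.PIdx, J.1.length % 2 ≠ ε → f J = 0 := by
    have hsum : ∑ J : S.PIdx, ((((-1 : ℂ) ^ J.1.length - (-1) ^ ε) * f J) • S.C J.1) = 0 := by
      have h1 : S.gauge v = ∑ J : S.PIdx, (((-1 : ℂ) ^ J.1.length * f J) • S.C J.1) := by
        rw [← hf, map_sum]
        refine Finset.sum_congr rfl fun J _ => ?_
        rw [map_smul, gauge_C, smul_smul, mul_comm]
      have h2 : ((-1 : ℂ) ^ ε) • v = ∑ J : S.PIdx, (((-1 : ℂ) ^ ε * f J) • S.C J.1) := by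
        rw [← hf, Finset.smul_sum]
        exact Finset.sum_congr rfl fun J _ => by rw [smul_smul]
      have h3 := hg
      rw [h1, h2] at h3
      simp only [sub_mul, sub_smul, Finset.sum_sub_distrib, h3, sub_self]
    intro J hJ
    have h4 := Fintype.linearIndependent_iff.mp S.CJ_linearIndependent _ hsum J
    have hne : ((-1 : ℂ) ^ J.1.length - (-1) ^ ε) ≠ 0 := by
      rw [neg_one_pow_mod]
      rcases Nat.mod_two_eq_zero_or_one J.1.length with h0 | h0 <;>
        interval_cases ε <;> simp_all <;> norm_num
    exact (mul_eq_zero.mp h4).resolve_left hne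
  rw [← hf]
  refine Submodule.sum_mem _ fun J _ => ?_
  by_cases h : J.1.length % 2 = ε
  · exact Submodule.smul_mem _ _ (Submodule.subset_span ⟨J, h, rfl⟩)
  · rw [hzero J h, zero_smul]; exact zero_mem _

lemma Tr_C (J : S.PIdx) : S.Tr (S.C J.1) = if J.1 = [] then 1 else 0 := by
  have hb := S.Tr_basis [] S.nil_mem_P J.1 J.2
  have heq : S.twist (S.Θ ((([] : List S.Λ).map S.c).prod)) ((J.1.map S.c).prod) = S.C J.1 := by
    show S.twist (S.Θ (S.C [])) (S.C J.1) = S.C J.1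
    rw [C_nil, S.Θ_one, S.twist_one_left (mod_two_le _) (S.C_mem_Vp J)]
  rw [heq] at hb
  simpa using hb

lemma twist_zero_left (y : S.carrier) : S.twist 0 y = 0 := by
  have h := S.twist_smul_left 0 0 y; simpa using h

lemma twist_zero_right (x : S.carrier) : S.twist x 0 = 0 := by
  have h := S.twist_smul_right 0 x 0; simpa using h

lemma Tr_factor {x y : S.carrier} (hx : x ∈ S.V) (hy : y ∈ S.V) :
    S.Tr (S.twist (S.Θ x) y) = (starRingEnd ℂ) (S.Tr x) * S.Tr y := by
  induction hx using Submodule.span_induction with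
  | mem a ha =>
      obtain ⟨J, rfl⟩ := ha
      induction hy using Submodule.span_induction with
      | mem b hb =>
          obtain ⟨K, rfl⟩ := hb
          have hb2 := S.Tr_basis J.1 J.2 K.1 K.2
          have heq : S.twist (S.Θ ((J.1.map S.c).prod)) ((K.1.map S.c).prod)
              = S.twist (S.Θ (S.C J.1)) (S.C K.1) := rfl
          rw [heq] at hb2
          rw [hb2, Tr_C, Tr_C]
          by_cases hJ : J.1 = [] <;> by_cases hK : K.1 = [] <;> simp [hJ, hK]
      | zero => rw [S.twist_zero_right]; simp
      | add u v hu hv ihu ihv => rw [S.twist_add_right, map_add, map_add, ihu, ihv, mul_add]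
      | smul z u hu ih =>
          rw [S.twist_smul_right, map_smul, map_smul, ih, smul_eq_mul, smul_eq_mul]; ring
  | zero => rw [S.Θ_zero, S.twist_zero_left]; simp
  | add u v hu hv ihu ihv =>
      rw [S.Θ_add, S.twist_add_left, map_add, map_add, ihu, ihv, map_add, add_mul]
  | smul z u hu ih =>
      rw [S.Θ_smul, S.twist_smul_left, map_smul, map_smul, ih, smul_eq_mul, smul_eq_mul, map_mul]
      ring

lemma mul_mem_Vp {ε ε' : ℕ} (hε : ε ≤ 1) (hε' : ε' ≤ 1) {x y : S.carrier}
    (hx : x ∈ S.Vp ε) (hy : y ∈ S.Vp ε') : x * y ∈ S.Vp ((ε + ε') % 2) := by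
  have hmem : x * y ∈ S.V := by
    have hxA := (Subalgebra.mem_toSubmodule _).mp (S.Vp_le_Aplus ε hx)
    have hyA := (Subalgebra.mem_toSubmodule _).mp (S.Vp_le_Aplus ε' hy)
    exact S.plus_span (x * y) (mul_mem hxA hyA)
  refine S.mem_Vp_of_gauge (mod_two_le _) hmem ?_
  rw [map_mul, S.gauge_Vp hx, S.gauge_Vp hy, smul_mul_assoc, mul_smul_comm, smul_smul, ← pow_add,
    neg_one_pow_mod]

/-- The set of elements of the form `Θ(U) ∘ U` with `U ∈ 𝔄₊` homogeneous. -/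
def Scone : Set S.carrier :=
  {x | ∃ (ε : ℕ) (U : S.carrier), ε ≤ 1 ∧ U ∈ S.Vp ε ∧ x = S.twist (S.Θ U) U}

/-- The additive cone generated by elements `Θ(U) ∘ U`. -/
def Kcone : AddSubmonoid S.carrier := AddSubmonoid.closure S.Scone

lemma one_mem_Scone : (1 : S.carrier) ∈ S.Scone := by
  refine ⟨0, 1, by norm_num, S.one_mem_Vp0, ?_⟩
  rw [S.Θ_one, S.twist_one_left (by norm_num) S.one_mem_Vp0]

lemma mul_mem_Scone {x y : S.carrier} (hx : x ∈ S.Scone) (hy : y ∈ S.Scone) :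
    x * y ∈ S.Scone := by
  obtain ⟨ε, U, hε, hU, rfl⟩ := hx
  obtain ⟨ε', B, hε', hB, rfl⟩ := hy
  have hUB := S.mul_mem_Vp hε hε' hU hB
  refine ⟨(ε + ε') % 2, U * B, mod_two_le _, hUB, ?_⟩
  have hζζ : S.ζ * S.ζ = -1 := by rw [← sq, S.ζ_sq]
  rw [S.twist_formula hε hε (S.Θ_mem_Vm hU) hU,
      S.twist_formula hε' hε' (S.Θ_mem_Vm hB) hB,
      S.twist_formula (mod_two_le _) (mod_two_le _) (S.Θ_mem_Vm hUB) hUB, S.Θ_mul]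
  have hcomm := S.comm_pm hU (S.Θ_mem_Vm hB)
  calc (S.ζ ^ ((ε : ℤ) * (ε : ℤ)) • (S.Θ U * U)) * (S.ζ ^ ((ε' : ℤ) * (ε' : ℤ)) • (S.Θ B * B))
      = (S.ζ ^ ((ε : ℤ) * (ε : ℤ)) * S.ζ ^ ((ε' : ℤ) * (ε' : ℤ))) • (S.Θ U * ((U * S.Θ B) * B)) := by
        rw [smul_mul_assoc, mul_smul_comm, smul_smul]
        congr 1
        simp only [mul_assoc]
    _ = (S.ζ ^ ((ε : ℤ) * (ε : ℤ)) * S.ζ ^ ((ε' : ℤ) * (ε' : ℤ)) * (-1 : ℂ) ^ (ε * ε'))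
          • (S.Θ U * ((S.Θ B * U) * B)) := by
        rw [hcomm, smul_mul_assoc, mul_smul_comm, smul_smul]
    _ = S.ζ ^ ((((ε + ε') % 2 : ℕ) : ℤ) * (((ε + ε') % 2 : ℕ) : ℤ)) • (S.Θ U * S.Θ B * (U * B)) := by
        congr 1
        · interval_cases ε <;> interval_cases ε' <;>
            · push_cast
              norm_num
              try linear_combination -S.ζ_sq
        · simp only [mul_assoc]

lemma Tr_nonneg_Scone {x : S.carrier} (hx : x ∈ S.Scone) : 0 ≤ S.Tr x := by
  obtain ⟨ε, U, hε, hU, rfl⟩ := hx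
  rw [S.Tr_factor (S.Vp_le_V ε hU) (S.Vp_le_V ε hU)]
  rw [starRingEnd_apply]
  exact star_mul_self_nonneg _

lemma Tr_nonneg_Kcone {x : S.carrier} (hx : x ∈ S.Kcone) : 0 ≤ S.Tr x := by
  induction hx using AddSubmonoid.closure_induction with
  | mem a ha => exact S.Tr_nonneg_Scone ha
  | zero => rw [map_zero]
  | add u v hu hv ihu ihv => rw [map_add]; exact add_nonneg ihu ihv

lemma mul_mem_Kcone {x y : S.carrier} (hx : x ∈ S.Kcone) (hy : y ∈ S.Kcone) :
    x * y ∈ S.Kcone := by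
  induction hx using AddSubmonoid.closure_induction with
  | mem a ha =>
      induction hy using AddSubmonoid.closure_induction with
      | mem b hb => exact AddSubmonoid.subset_closure (S.mul_mem_Scone ha hb)
      | zero => rw [mul_zero]; exact zero_mem _
      | add u v hu hv ihu ihv => rw [mul_add]; exact add_mem ihu ihv
  | zero => rw [zero_mul]; exact zero_mem _
  | add u v hu hv ihu ihv => rw [add_mul]; exact add_mem ihu ihv

lemma pow_mem_Kcone {x : S.carrier} (hx : x ∈ S.Kcone) (n : ℕ) : x ^ n ∈ S.Kcone := by
  induction n with
  | zero => rw [pow_zero]; exact AddSubmonoid.subset_closure S.one_mem_Scone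
  | succ n ih => rw [pow_succ]; exact S.mul_mem_Kcone ih hx


open Matrix

instance (S : MajoranaSetting) : FiniteDimensional ℂ S.carrier := by
  have htop : (⊤ : Submodule ℂ S.carrier)
      = Submodule.span ℂ (Set.range fun p : S.PIdx × S.PIdx =>
          S.twist (S.Θ ((p.1.1.map S.c).prod)) ((p.2.1.map S.c).prod)) :=
    le_antisymm (fun x _ => S.basis_span x) le_top
  exact Module.finite_def.mpr (by rw [htop]; exact Submodule.fg_span (Set.finite_range _))

lemma Θ_sum {ι : Type*} (s : Finset ι) (f : ι → S.carrier) :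
    S.Θ (∑ i ∈ s, f i) = ∑ i ∈ s, S.Θ (f i) := by
  classical
  induction s using Finset.induction_on with
  | empty => simpa using S.Θ_zero
  | insert a s h ih => rw [Finset.sum_insert h, S.Θ_add, ih, Finset.sum_insert h]

/-- The twisted product as a bilinear map. -/
def twistL : S.carrier →ₗ[ℂ] S.carrier →ₗ[ℂ] S.carrier :=
  LinearMap.mk₂ ℂ S.twist S.twist_add_left S.twist_smul_left S.twist_add_right S.twist_smul_right

lemma twistL_apply (x y : S.carrier) : S.twistL x y = S.twist x y := rfl

lemma gauge_twist_basis (p q : S.PIdx) :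
    S.gauge (S.twist (S.Θ (S.C p.1)) (S.C q.1))
      = ((-1 : ℂ) ^ (p.1.length + q.1.length)) • S.twist (S.Θ (S.C p.1)) (S.C q.1) := by
  have h1 : S.Θ (S.C p.1) ∈ S.Vm (p.1.length % 2) := S.Θ_mem_Vm (S.C_mem_Vp p)
  have h2 := S.C_mem_Vp q
  rw [S.twist_formula (mod_two_le _) (mod_two_le _) h1 h2, _root_.map_smul, _root_.map_mul,
    S.gauge_Vm h1, S.gauge_Vp h2, smul_mul_assoc, mul_smul_comm, smul_smul, smul_smul, smul_smul]
  congr 1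
  rw [pow_add, neg_one_pow_mod p.1.length, neg_one_pow_mod q.1.length]
  ring

lemma Tr_gauge (x : S.carrier) : S.Tr (S.gauge x) = S.Tr x := by
  have hx := S.basis_span x
  induction hx using Submodule.span_induction with
  | mem a ha =>
      obtain ⟨p, rfl⟩ := ha
      beta_reduce
      have hg := S.gauge_twist_basis p.1 p.2
      have heq : S.twist (S.Θ ((p.1.1.map S.c).prod)) ((p.2.1.map S.c).prod)
          = S.twist (S.Θ (S.C p.1.1)) (S.C p.2.1) := rfl
      rw [heq, hg, _root_.map_smul, smul_eq_mul]
      have hb := S.Tr_basis p.1.1 p.1.2 p.2.1 p.2.2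
      rw [heq] at hb
      rw [hb]
      by_cases h : p.1.1 = [] ∧ p.2.1 = []
      · rw [if_pos h, h.1, h.2]; norm_num
      · rw [if_neg h]; ring
  | zero => rw [_root_.map_zero]
  | add u v hu hv ihu ihv => rw [_root_.map_add, _root_.map_add, _root_.map_add, ihu, ihv]
  | smul z u hu ih => rw [_root_.map_smul, _root_.map_smul, _root_.map_smul, ih]

lemma negHam_eq (Jc : List S.Λ → List S.Λ → ℂ) :
    -(S.Ham Jc) = ∑ p : S.PIdx, ∑ q : S.PIdx,
      Jc p.1 q.1 • S.twist (S.Θ (S.C p.1)) (S.C q.1) := by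
  rw [Ham, neg_neg]
  rw [Finset.sum_subtype S.P (fun _ => Iff.rfl)
    (fun J => ∑ J' ∈ S.P, Jc J J' • S.twist (S.Θ (S.C J)) (S.C J'))]
  exact Finset.sum_congr rfl fun p _ => Finset.sum_subtype S.P (fun _ => Iff.rfl) _

lemma Jc_parity (Jc : List S.Λ → List S.Λ → ℂ) (hGI : S.gauge (S.Ham Jc) = S.Ham Jc)
    (p q : S.PIdx) (hpq : (p.1.length + q.1.length) % 2 = 1) : Jc p.1 q.1 = 0 := by
  have hg : S.gauge (-(S.Ham Jc)) = -(S.Ham Jc) := by rw [_root_.map_neg, hGI]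
  rw [S.negHam_eq Jc, _root_.map_sum] at hg
  have hga : ∀ p' : S.PIdx,
      S.gauge (∑ q' : S.PIdx, Jc p'.1 q'.1 • S.twist (S.Θ (S.C p'.1)) (S.C q'.1))
        = ∑ q' : S.PIdx, (Jc p'.1 q'.1 * (-1 : ℂ) ^ (p'.1.length + q'.1.length))
            • S.twist (S.Θ (S.C p'.1)) (S.C q'.1) := by
    intro p'
    rw [_root_.map_sum]
    refine Finset.sum_congr rfl fun q' _ => ?_
    rw [_root_.map_smul, S.gauge_twist_basis, smul_smul]
  simp only [hga] at hg
  have hg2 : ∑ x : S.PIdx × S.PIdx,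
      ((Jc x.1.1 x.2.1 * (-1 : ℂ) ^ (x.1.1.length + x.2.1.length) - Jc x.1.1 x.2.1)
        • S.twist (S.Θ ((x.1.1.map S.c).prod)) ((x.2.1.map S.c).prod)) = 0 := by
    rw [Fintype.sum_prod_type]
    simp only [sub_smul, Finset.sum_sub_distrib]
    exact sub_eq_zero.mpr hg
  have h := Fintype.linearIndependent_iff.mp S.basis_indep _ hg2 (p, q)
  have hm : (-1 : ℂ) ^ (p.1.length + q.1.length) = -1 := by
    rw [neg_one_pow_mod, hpq, pow_one]
  rw [hm] at h
  linear_combination (-1/2 : ℂ) * h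

lemma block_sum_eq (N : Matrix S.PIdx S.PIdx ℂ) :
    ∑ p : S.PIdx, ∑ q : S.PIdx, (Nᴴ * N) p q • S.twist (S.Θ (S.C p.1)) (S.C q.1)
      = ∑ k : S.PIdx, S.twist (S.Θ (∑ p : S.PIdx, N k p • S.C p.1))
          (∑ q : S.PIdx, N k q • S.C q.1) := by
  have hexp : ∀ k : S.PIdx,
      S.twist (S.Θ (∑ p : S.PIdx, N k p • S.C p.1)) (∑ q : S.PIdx, N k q • S.C q.1)
        = ∑ p : S.PIdx, ∑ q : S.PIdx,
            ((starRingEnd ℂ) (N k p) * N k q) • S.twist (S.Θ (S.C p.1)) (S.C q.1) := by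
    intro k
    rw [S.Θ_sum]
    simp only [S.Θ_smul]
    rw [← twistL_apply]
    rw [_root_.map_sum S.twistL
      (fun p : S.PIdx => (starRingEnd ℂ) (N k p) • S.Θ (S.C p.1)) Finset.univ,
      LinearMap.sum_apply]
    refine Finset.sum_congr rfl fun p _ => ?_
    rw [_root_.map_smul, LinearMap.smul_apply, _root_.map_sum, Finset.smul_sum]
    refine Finset.sum_congr rfl fun q _ => ?_
    rw [_root_.map_smul, twistL_apply, smul_smul]
  calc ∑ p : S.PIdx, ∑ q : S.PIdx, (Nᴴ * N) p q • S.twist (S.Θ (S.C p.1)) (S.C q.1)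
      = ∑ p : S.PIdx, ∑ q : S.PIdx, ∑ k : S.PIdx,
          ((starRingEnd ℂ) (N k p) * N k q) • S.twist (S.Θ (S.C p.1)) (S.C q.1) := by
        refine Finset.sum_congr rfl fun p _ => Finset.sum_congr rfl fun q _ => ?_
        rw [← Finset.sum_smul]
        congr 1
    _ = ∑ p : S.PIdx, ∑ k : S.PIdx, ∑ q : S.PIdx,
          ((starRingEnd ℂ) (N k p) * N k q) • S.twist (S.Θ (S.C p.1)) (S.C q.1) :=
        Finset.sum_congr rfl fun p _ => Finset.sum_comm
    _ = ∑ k : S.PIdx, ∑ p : S.PIdx, ∑ q : S.PIdx,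
          ((starRingEnd ℂ) (N k p) * N k q) • S.twist (S.Θ (S.C p.1)) (S.C q.1) :=
        Finset.sum_comm
    _ = ∑ k : S.PIdx, S.twist (S.Θ (∑ p : S.PIdx, N k p • S.C p.1))
          (∑ q : S.PIdx, N k q • S.C q.1) :=
        Finset.sum_congr rfl fun k _ => (hexp k).symm

/-- The diagonal projection matrices onto a parity class. -/
def Dmat (ε : ℕ) : Matrix S.PIdx S.PIdx ℂ :=
  Matrix.diagonal (fun p => if p.1.length % 2 = ε then (1 : ℂ) else 0)

lemma N_supp {ε : ℕ} (M N : Matrix S.PIdx S.PIdx ℂ)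
    (hN : S.Dmat ε * M * S.Dmat ε = Nᴴ * N)
    (k p : S.PIdx) (hp : p.1.length % 2 ≠ ε) : N k p = 0 := by
  have hdiag : (Nᴴ * N) p p = 0 := by
    rw [← hN]
    simp [Dmat, Matrix.mul_diagonal, hp]
  rw [Matrix.mul_apply] at hdiag
  simp only [Matrix.conjTranspose_apply] at hdiag
  have hnn : ∀ k' ∈ (Finset.univ : Finset S.PIdx), (0 : ℂ) ≤ star (N k' p) * N k' p :=
    fun k' _ => star_mul_self_nonneg _
  have hz := (Finset.sum_eq_zero_iff_of_nonneg hnn).mp hdiag k (Finset.mem_univ k)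
  rcases mul_eq_zero.mp hz with h | h
  · exact star_eq_zero.mp h
  · exact h

open scoped MatrixOrder in
lemma psd_eq_conjTranspose_mul_self {n : Type*} [Fintype n] [DecidableEq n]
    {A : Matrix n n ℂ} (hA : A.PosSemidef) : ∃ B : Matrix n n ℂ, A = Bᴴ * B := by
  obtain ⟨X, hX, -, hXA⟩ :=
    CFC.exists_sqrt_of_isSelfAdjoint_of_quasispectrumRestricts (a := A) hA.isHermitian
      (QuasispectrumRestricts.nnreal_of_nonneg hA.nonneg)
  refine ⟨X, ?_⟩
  rw [← hXA]
  have hXs : Xᴴ = X := hX.star_eq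
  rw [hXs]

lemma negHam_mem_Kcone (Jc : List S.Λ → List S.Λ → ℂ)
    (hGI : S.gauge (S.Ham Jc) = S.Ham Jc) (hpsd : (S.Jmat Jc).PosSemidef) :
    -(S.Ham Jc) ∈ S.Kcone := by
  classical
  have hDH : ∀ ε, (S.Dmat ε)ᴴ = S.Dmat ε := by
    intro ε
    ext p q
    rw [Matrix.conjTranspose_apply]
    by_cases hpq : p = q
    · subst hpq
      simp only [Dmat, Matrix.diagonal_apply_eq]
      split_ifs <;> simp
    · rw [show (S.Dmat ε) q p = 0 from Matrix.diagonal_apply_ne _ (Ne.symm hpq),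
        show (S.Dmat ε) p q = 0 from Matrix.diagonal_apply_ne _ hpq, star_zero]
  have hPSD : ∀ ε, (S.Dmat ε * S.Jmat Jc * S.Dmat ε).PosSemidef := by
    intro ε
    have h := hpsd.mul_mul_conjTranspose_same (S.Dmat ε)
    rwa [hDH] at h
  obtain ⟨N0, hN0⟩ := psd_eq_conjTranspose_mul_self (hPSD 0)
  obtain ⟨N1, hN1⟩ := psd_eq_conjTranspose_mul_self (hPSD 1)
  have hMsplit : ∀ p q : S.PIdx, S.Jmat Jc p q = (N0ᴴ * N0) p q + (N1ᴴ * N1) p q := by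
    intro p q
    rw [← hN0, ← hN1]
    simp only [Dmat, Matrix.mul_diagonal, Matrix.diagonal_mul]
    rcases Nat.mod_two_eq_zero_or_one p.1.length with hp | hp <;>
      rcases Nat.mod_two_eq_zero_or_one q.1.length with hq | hq <;>
      simp only [hp, hq] <;> norm_num
    · exact S.Jc_parity Jc hGI p q (by omega)
    · exact S.Jc_parity Jc hGI p q (by omega)
  rw [S.negHam_eq Jc]
  have hsum : ∑ p : S.PIdx, ∑ q : S.PIdx, Jc p.1 q.1 • S.twist (S.Θ (S.C p.1)) (S.C q.1)
      = (∑ p : S.PIdx, ∑ q : S.PIdx, (N0ᴴ * N0) p q • S.twist (S.Θ (S.C p.1)) (S.C q.1))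
        + (∑ p : S.PIdx, ∑ q : S.PIdx, (N1ᴴ * N1) p q • S.twist (S.Θ (S.C p.1)) (S.C q.1)) := by
    rw [← Finset.sum_add_distrib]
    refine Finset.sum_congr rfl fun p _ => ?_
    rw [← Finset.sum_add_distrib]
    refine Finset.sum_congr rfl fun q _ => ?_
    rw [← add_smul, ← hMsplit p q]
    rfl
  rw [hsum]
  have hblock : ∀ (ε : ℕ), ε ≤ 1 → ∀ N : Matrix S.PIdx S.PIdx ℂ,
      (S.Dmat ε * S.Jmat Jc * S.Dmat ε = Nᴴ * N) →
      (∑ p : S.PIdx, ∑ q : S.PIdx, (Nᴴ * N) p q • S.twist (S.Θ (S.C p.1)) (S.C q.1)) ∈ S.Kcone := by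
    intro ε hε N hN
    rw [S.block_sum_eq N]
    refine AddSubmonoid.sum_mem _ fun k _ => AddSubmonoid.subset_closure ?_
    refine ⟨ε, _, hε, ?_, rfl⟩
    refine Submodule.sum_mem _ fun p _ => ?_
    by_cases h : p.1.length % 2 = ε
    · exact Submodule.smul_mem _ _ (Submodule.subset_span ⟨p, h, rfl⟩)
    · rw [S.N_supp _ N hN k p h, zero_smul]; exact zero_mem _
  exact add_mem (hblock 0 (by norm_num) N0 hN0) (hblock 1 (by norm_num) N1 hN1)

lemma gauge_expm (Jc : List S.Λ → List S.Λ → ℂ) (hGI : S.gauge (S.Ham Jc) = S.Ham Jc) :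
    S.gauge (S.expm (-(S.Ham Jc))) = S.expm (-(S.Ham Jc)) := by
  have hc : Continuous S.gauge := S.gauge.toLinearMap.continuous_of_finiteDimensional
  rw [expm, NormedSpace.map_exp_of_mem_ball (𝕂 := ℂ) (S.gauge : S.carrier ≃ₐ[ℂ] S.carrier) hc _
    ((NormedSpace.expSeries_radius_eq_top ℂ S.carrier).symm ▸ edist_lt_top _ _), _root_.map_neg, hGI]

lemma Tr_mul_expm_nonneg (Jc : List S.Λ → List S.Λ → ℂ)
    (hGI : S.gauge (S.Ham Jc) = S.Ham Jc) (hpsd : (S.Jmat Jc).PosSemidef)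
    {Q : S.carrier} (hQ : Q ∈ S.Kcone) :
    0 ≤ S.Tr (Q * S.expm (-(S.Ham Jc))) := by
  have hT := S.negHam_mem_Kcone Jc hGI hpsd
  let φ : S.carrier →ₗ[ℂ] ℂ := S.Tr ∘ₗ LinearMap.mulLeft ℂ Q
  let φC : S.carrier →L[ℂ] ℂ := ⟨φ, φ.continuous_of_finiteDimensional⟩
  have h2 := (NormedSpace.exp_series_hasSum_exp' (𝕂 := ℂ) (-(S.Ham Jc))).mapL φC
  have h3 : ∀ n : ℕ, φC ((n.factorial : ℂ)⁻¹ • (-(S.Ham Jc)) ^ n)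
      = ((n.factorial : ℂ))⁻¹ * S.Tr (Q * (-(S.Ham Jc)) ^ n) := fun n => by
    rw [_root_.map_smul, smul_eq_mul]; rfl
  have hmap : S.Tr (Q * S.expm (-(S.Ham Jc)))
      = ∑' n : ℕ, ((n.factorial : ℂ))⁻¹ * S.Tr (Q * (-(S.Ham Jc)) ^ n) := by
    calc S.Tr (Q * S.expm (-(S.Ham Jc))) = φC (NormedSpace.exp (-(S.Ham Jc))) := rfl
      _ = ∑' n : ℕ, φC ((n.factorial : ℂ)⁻¹ • (-(S.Ham Jc)) ^ n) := h2.tsum_eq.symm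
      _ = ∑' n : ℕ, ((n.factorial : ℂ))⁻¹ * S.Tr (Q * (-(S.Ham Jc)) ^ n) := tsum_congr h3
  rw [hmap]
  refine tsum_nonneg fun n => ?_
  have h4 : 0 ≤ S.Tr (Q * (-(S.Ham Jc)) ^ n) :=
    S.Tr_nonneg_Kcone (S.mul_mem_Kcone hQ (S.pow_mem_Kcone hT n))
  have h5 : (0 : ℂ) ≤ ((n.factorial : ℂ))⁻¹ := by
    have he : ((n.factorial : ℂ))⁻¹ = Complex.ofReal ((n.factorial : ℝ)⁻¹) := by
      push_cast; ring
    rw [he]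
    exact Complex.zero_le_real.mpr (inv_nonneg.mpr (Nat.cast_nonneg _))
  exact mul_nonneg h5 h4

lemma cross_zero (Jc : List S.Λ → List S.Λ → ℂ) (hGI : S.gauge (S.Ham Jc) = S.Ham Jc)
    {ε ε' : ℕ} (hε : ε ≤ 1) (hε' : ε' ≤ 1) (hne : ε ≠ ε')
    {x y : S.carrier} (hx : x ∈ S.Vp ε) (hy : y ∈ S.Vp ε') :
    S.Tr (S.twist (S.Θ x) y * S.expm (-(S.Ham Jc))) = 0 := by
  have hgtw : S.gauge (S.twist (S.Θ x) y) = -(S.twist (S.Θ x) y) := by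
    rw [S.twist_formula hε hε' (S.Θ_mem_Vm hx) hy, _root_.map_smul, _root_.map_mul,
      S.gauge_Vm (S.Θ_mem_Vm hx), S.gauge_Vp hy, smul_mul_assoc, mul_smul_comm,
      smul_smul, smul_smul, ← neg_smul]
    congr 1
    have hmm : ((-1 : ℂ)) ^ ε * (-1) ^ ε' = -1 := by
      interval_cases ε <;> interval_cases ε' <;> simp_all
    rw [mul_assoc, hmm, mul_neg_one]
  have hgE := S.gauge_expm Jc hGI
  have h1 : S.Tr (S.twist (S.Θ x) y * S.expm (-(S.Ham Jc)))
      = - S.Tr (S.twist (S.Θ x) y * S.expm (-(S.Ham Jc))) := by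
    conv_lhs => rw [← S.Tr_gauge (S.twist (S.Θ x) y * S.expm (-(S.Ham Jc)))]
    rw [_root_.map_mul, hgtw, hgE, neg_mul, _root_.map_neg]
  linear_combination (1 / 2 : ℂ) * h1

end MajoranaSetting

/-- Reflection positivity of `ω_H`, Part I: if `H` is reflection
invariant and globally gauge invariant and the full coupling matrix `J` is
positive semidefinite, then `ω_H(A) = Tr(A e^{-H})` is reflection positive on `𝔄₊`. -/
theorem reflection_positivity_I (S : MajoranaSetting)
    (Jc : List S.Λ → List S.Λ → ℂ)
    (hRI : S.Θ (S.Ham Jc) = S.Ham Jc)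
    (hGI : S.gauge (S.Ham Jc) = S.Ham Jc)
    (hpsd : (S.Jmat Jc).PosSemidef) :
    ∀ A ∈ S.Aplus, 0 ≤ S.Tr (S.twist (S.Θ A) A * S.expm (-(S.Ham Jc))) := by
  intro A hA
  have hAV : A ∈ S.V := S.plus_span A hA
  obtain ⟨a, ha⟩ := (Submodule.mem_span_range_iff_exists_fun ℂ).mp hAV
  have hApart : ∀ ε : ℕ,
      (∑ J : S.PIdx, (if J.1.length % 2 = ε then a J else 0) • S.C J.1) ∈ S.Vp ε := by
    intro ε
    refine Submodule.sum_mem _ fun J _ => ?_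
    by_cases h : J.1.length % 2 = ε
    · rw [if_pos h]; exact Submodule.smul_mem _ _ (Submodule.subset_span ⟨J, h, rfl⟩)
    · rw [if_neg h, zero_smul]; exact zero_mem _
  set A0 : S.carrier := ∑ J : S.PIdx, (if J.1.length % 2 = 0 then a J else 0) • S.C J.1 with hA0
  set A1 : S.carrier := ∑ J : S.PIdx, (if J.1.length % 2 = 1 then a J else 0) • S.C J.1 with hA1
  have hm0 : A0 ∈ S.Vp 0 := hApart 0
  have hm1 : A1 ∈ S.Vp 1 := hApart 1
  have hsplit : A = A0 + A1 := by
    rw [hA0, hA1, ← Finset.sum_add_distrib, ← ha]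
    refine Finset.sum_congr rfl fun J _ => ?_
    rw [← add_smul]
    congr 1
    rcases Nat.mod_two_eq_zero_or_one J.1.length with h | h <;> simp [h]
  have hQ0 : 0 ≤ S.Tr (S.twist (S.Θ A0) A0 * S.expm (-(S.Ham Jc))) :=
    S.Tr_mul_expm_nonneg Jc hGI hpsd
      (AddSubmonoid.subset_closure ⟨0, A0, by norm_num, hm0, rfl⟩)
  have hQ1 : 0 ≤ S.Tr (S.twist (S.Θ A1) A1 * S.expm (-(S.Ham Jc))) :=
    S.Tr_mul_expm_nonneg Jc hGI hpsd
      (AddSubmonoid.subset_closure ⟨1, A1, by norm_num, hm1, rfl⟩)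
  have hc01 : S.Tr (S.twist (S.Θ A0) A1 * S.expm (-(S.Ham Jc))) = 0 :=
    S.cross_zero Jc hGI (by norm_num) (by norm_num) (by norm_num) hm0 hm1
  have hc10 : S.Tr (S.twist (S.Θ A1) A0 * S.expm (-(S.Ham Jc))) = 0 :=
    S.cross_zero Jc hGI (by norm_num) (by norm_num) (by norm_num) hm1 hm0
  rw [hsplit, S.Θ_add, S.twist_add_left, S.twist_add_right, S.twist_add_right,
    add_mul, add_mul, add_mul, map_add, map_add, map_add, hc01, hc10]
  rw [add_zero, zero_add]
  exact add_nonneg hQ0 hQ1
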